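/- Let m ≥ 4, let Γ be the alternating group on Fin m (viewed as a subgroup of Perm(Fin m)), and let a : Fin m → ℕ with a(i) ≥ 2 for all i. Then the least n ∈ ℕ such that every m-edge-colouring of the complete graph on n vertices is Γ-switch equivalent to a colouring containing, for some i ∈ Fin m, a monochromatic K_{a(i)} of colour i, equals min_{i ∈ Fin m} a(i). -/

import Mathlib

open scoped Classical in
/-- Switch the edge-colouring `c` at vertex `v` with permutation `π`: every edge
incident with `v` has its colour replaced by its image under `π`. -/
noncomputable def switchAt {V K : Type*} (c : Sym2 V → K) (π : Equiv.Perm K) (v : V) :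
    Sym2 V → K :=
  fun s => if v ∈ s then π (c s) else c s

/-- Two colourings are `Γ`-switch equivalent if one is obtained from the other by a
finite sequence of switches at vertices with permutations from `Γ`. -/
def SwitchEquiv {V K : Type*} (Γ : Subgroup (Equiv.Perm K)) (c c' : Sym2 V → K) : Prop :=
  Relation.ReflTransGen (fun d d' => ∃ π ∈ Γ, ∃ v : V, d' = switchAt d π v) c c'

/-- The colouring `c` contains a monochromatic complete graph on `t` vertices of colour `i`. -/
def HasMonoK {V K : Type*} (c : Sym2 V → K) (i : K) (t : ℕ) : Prop :=
  ∃ S : Finset V, S.card = t ∧ ∀ x ∈ S, ∀ y ∈ S, x ≠ y → c s(x, y) = i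

/-- In `A_m` with `m ≥ 4`, for any `x i` there are `π σ ∈ A_m` with
`σ⁻¹ (π⁻¹ (σ (π x))) = i`. -/
lemma exists_comm_map (m : ℕ) (hm : 4 ≤ m) (x i : Fin m) :
    ∃ π σ : Equiv.Perm (Fin m), π ∈ alternatingGroup (Fin m) ∧
      σ ∈ alternatingGroup (Fin m) ∧ σ⁻¹ (π⁻¹ (σ (π x))) = i := by
  by_cases hxi : x = i
  · exact ⟨1, 1, one_mem _, one_mem _, by simp [hxi]⟩
  · -- pick z w distinct, both outside {x, i}
    have hcard : 1 < (({x, i} : Finset (Fin m))ᶜ).card := by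
      have h1 : ({x, i} : Finset (Fin m)).card ≤ 2 := by
        apply le_trans (Finset.card_insert_le _ _); simp
      have h2 : (({x, i} : Finset (Fin m))ᶜ).card =
          Fintype.card (Fin m) - ({x, i} : Finset (Fin m)).card := Finset.card_compl _
      rw [h2, Fintype.card_fin]; omega
    obtain ⟨z, hz, w, hw, hzw⟩ := Finset.one_lt_card.mp hcard
    simp only [Finset.mem_compl, Finset.mem_insert, Finset.mem_singleton, not_or] at hz hw
    obtain ⟨hzx, hzi⟩ := hz
    obtain ⟨hwx, hwi⟩ := hw
    replace hzx : z ≠ x := hzx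
    replace hzi : z ≠ i := hzi
    replace hwx : w ≠ x := hwx
    replace hwi : w ≠ i := hwi
    -- σ = (x i z) as swap x z * swap x i ; π = (z i w) as swap z w * swap z i
    refine ⟨Equiv.swap z w * Equiv.swap z i, Equiv.swap x z * Equiv.swap x i,
      ?_, ?_, ?_⟩
    · rw [Equiv.Perm.mem_alternatingGroup, Equiv.Perm.sign_mul,
        Equiv.Perm.sign_swap hzw, Equiv.Perm.sign_swap hzi]
      norm_num
    · rw [Equiv.Perm.mem_alternatingGroup, Equiv.Perm.sign_mul,
        Equiv.Perm.sign_swap (Ne.symm hzx), Equiv.Perm.sign_swap (show x ≠ i from hxi)]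
      norm_num
    · set π := Equiv.swap z w * Equiv.swap z i with hπ
      set σ := Equiv.swap x z * Equiv.swap x i with hσ
      have hπx : π x = x := by
        simp [hπ, Equiv.Perm.mul_apply,
          Equiv.swap_apply_of_ne_of_ne (Ne.symm hzx) hxi,
          Equiv.swap_apply_of_ne_of_ne (Ne.symm hzx) (Ne.symm hwx)]
      have hσx : σ x = i := by
        simp [hσ, Equiv.Perm.mul_apply,
          Equiv.swap_apply_of_ne_of_ne (Ne.symm hxi) (Ne.symm hzi)]
      have hπz : π z = i := by
        simp [hπ, Equiv.Perm.mul_apply,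
          Equiv.swap_apply_of_ne_of_ne (Ne.symm hzi) (Ne.symm hwi)]
      have hσi : σ i = z := by
        simp [hσ, Equiv.Perm.mul_apply]
      have hπinv : π⁻¹ i = z := by rw [← hπz, Equiv.Perm.inv_def, Equiv.symm_apply_apply]
      have hσinv : σ⁻¹ z = i := by rw [← hσi, Equiv.Perm.inv_def, Equiv.symm_apply_apply]
      rw [hπx, hσx, hπinv, hσinv]

/-- Change the colour of a single edge to `i`, fixing everything else. -/
lemma fix_edge {m : ℕ} (hm : 4 ≤ m) {V : Type*} (c : Sym2 V → Fin m)
    {u v : V} (huv : u ≠ v) (i : Fin m) :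
    ∃ c', SwitchEquiv (alternatingGroup (Fin m)) c c' ∧ c' s(u, v) = i ∧
      ∀ s, s ≠ s(u, v) → c' s = c s := by
  obtain ⟨π, σ, hπ, hσ, hcomm⟩ := exists_comm_map m hm (c s(u, v)) i
  refine ⟨switchAt (switchAt (switchAt (switchAt c π u) σ v) π⁻¹ u) σ⁻¹ v, ?_, ?_, ?_⟩
  · exact (((Relation.ReflTransGen.refl.tail ⟨π, hπ, u, rfl⟩).tail
      ⟨σ, hσ, v, rfl⟩).tail ⟨π⁻¹, inv_mem hπ, u, rfl⟩).tail ⟨σ⁻¹, inv_mem hσ, v, rfl⟩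
  · have hu : u ∈ s(u, v) := Sym2.mem_mk_left u v
    have hv : v ∈ s(u, v) := Sym2.mem_mk_right u v
    simp only [switchAt, if_pos hu, if_pos hv]
    exact hcomm
  · intro s hs
    by_cases hu : u ∈ s <;> by_cases hv : v ∈ s
    · exact absurd (Sym2.eq_of_ne_mem huv hu hv (Sym2.mem_mk_left u v)
        (Sym2.mem_mk_right u v)) hs
    · simp [switchAt, if_pos hu, if_neg hv]
    · simp [switchAt, if_pos hv, if_neg hu]
    · simp [switchAt, if_neg hu, if_neg hv]

open scoped Classical in
/-- Any colouring can be switched to be monochromatic of colour `i` (off-diagonal). -/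
lemma make_mono {m : ℕ} (hm : 4 ≤ m) {n : ℕ} (i : Fin m) :
    ∀ N (c : Sym2 (Fin n) → Fin m),
      (Finset.univ.filter (fun p : Fin n × Fin n => p.1 ≠ p.2 ∧ c s(p.1, p.2) ≠ i)).card ≤ N →
      ∃ c', SwitchEquiv (alternatingGroup (Fin m)) c c' ∧
        ∀ x y : Fin n, x ≠ y → c' s(x, y) = i := by
  intro N
  induction N with
  | zero =>
      intro c hc
      refine ⟨c, Relation.ReflTransGen.refl, fun x y hxy => ?_⟩
      by_contra h
      have : (x, y) ∈ Finset.univ.filter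
          (fun p : Fin n × Fin n => p.1 ≠ p.2 ∧ c s(p.1, p.2) ≠ i) := by
        simp [hxy, h]
      have := Finset.card_pos.mpr ⟨_, this⟩
      omega
  | succ N ih =>
      intro c hc
      by_cases hempty : (Finset.univ.filter
          (fun p : Fin n × Fin n => p.1 ≠ p.2 ∧ c s(p.1, p.2) ≠ i)) = ∅
      · refine ⟨c, Relation.ReflTransGen.refl, fun x y hxy => ?_⟩
        by_contra h
        have : (x, y) ∈ Finset.univ.filter
            (fun p : Fin n × Fin n => p.1 ≠ p.2 ∧ c s(p.1, p.2) ≠ i) := by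
          simp [hxy, h]
        rw [hempty] at this
        exact absurd this (Finset.notMem_empty _)
      · obtain ⟨p, hp⟩ := Finset.nonempty_iff_ne_empty.mpr hempty
        simp only [Finset.mem_filter, Finset.mem_univ, true_and] at hp
        obtain ⟨hp1, hp2⟩ := hp
        obtain ⟨c₁, hequiv, hval, hrest⟩ := fix_edge hm c hp1 i
        have hsub : (Finset.univ.filter
            (fun q : Fin n × Fin n => q.1 ≠ q.2 ∧ c₁ s(q.1, q.2) ≠ i)) ⊆
            (Finset.univ.filter
            (fun q : Fin n × Fin n => q.1 ≠ q.2 ∧ c s(q.1, q.2) ≠ i)).erase p := by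
          intro q hq
          simp only [Finset.mem_filter, Finset.mem_univ, true_and] at hq
          obtain ⟨hq1, hq2⟩ := hq
          rw [Finset.mem_erase]
          by_cases hqp : s(q.1, q.2) = s(p.1, p.2)
          · rw [hqp, hval] at hq2; exact absurd rfl hq2
          · refine ⟨?_, ?_⟩
            · rintro rfl; exact hqp rfl
            · rw [hrest _ hqp] at hq2
              simp [hq1, hq2]
        have hcard : (Finset.univ.filter
            (fun q : Fin n × Fin n => q.1 ≠ q.2 ∧ c₁ s(q.1, q.2) ≠ i)).card ≤ N := by
          have h1 := Finset.card_le_card hsub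
          have hpmem : p ∈ Finset.univ.filter
              (fun q : Fin n × Fin n => q.1 ≠ q.2 ∧ c s(q.1, q.2) ≠ i) := by
            simp [hp1, hp2]
          rw [Finset.card_erase_of_mem hpmem] at h1
          have := Finset.card_pos.mpr ⟨_, hpmem⟩
          omega
        obtain ⟨c', hequiv', hmono⟩ := ih c₁ hcard
        exact ⟨c', hequiv.trans hequiv', hmono⟩

/-- For the alternating group `A_m` (m ≥ 4), the `A_m`-switch Ramsey number
`R_{A_m}(a₁,…,a_m)` equals `min_i a i`. -/
theorem stmt6 (m : ℕ) (hm : 4 ≤ m) (a : Fin m → ℕ) (ha : ∀ i, 2 ≤ a i) :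
    IsLeast {n : ℕ | ∀ c : Sym2 (Fin n) → Fin m,
      ∃ c', SwitchEquiv (alternatingGroup (Fin m)) c c' ∧
        ∃ i : Fin m, HasMonoK c' i (a i)} (⨅ i, a i) := by
  have hpos : 0 < m := by omega
  haveI : Nonempty (Fin m) := Fin.pos_iff_nonempty.mp hpos
  have hmem : (⨅ i, a i) ∈ Set.range a := by
    rw [iInf]; exact Nat.sInf_mem (Set.range_nonempty a)
  obtain ⟨i₀, hi₀⟩ := hmem
  have hle : ∀ i, (⨅ j, a j) ≤ a i := fun i => by
    rw [iInf]; exact Nat.sInf_le ⟨i, rfl⟩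
  constructor
  · intro c
    obtain ⟨c', hequiv, hmono⟩ :=
      make_mono hm (n := ⨅ j, a j) i₀ _ c le_rfl
    refine ⟨c', hequiv, i₀, Finset.univ, ?_, fun x _ y _ hxy => hmono x y hxy⟩
    simp [hi₀]
  · intro n hn
    obtain ⟨c', _, i, S, hScard, _⟩ := hn (fun _ => i₀)
    calc (⨅ j, a j) ≤ a i := hle i
      _ ≤ n := by
        rw [← hScard]
        simpa using Finset.card_le_univ S
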